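/- Let (B, m, u, Δ, ε, c) be a braided bialgebra over a field K which is generated as a K-algebra by a subspace V ⊆ B. Then the following are equivalent: (i) V is a braided subspace of B, i.e. c(V⊗V) ⊆ V⊗V; (ii) V is a categorical subspace of (B, c), i.e. c(V⊗B) ⊆ B⊗V and c(B⊗V) ⊆ V⊗B. -/

import Mathlib

open TensorProduct LinearMap

noncomputable section

variable (K : Type*) [Field K]

section BraidedDefs

variable (V : Type*) [AddCommGroup V] [Module K V]

/-- The Yang–Baxter (braid) equation for `c : V ⊗ V → V ⊗ V`:
`c₁ c₂ c₁ = c₂ c₁ c₂` on `(V ⊗ V) ⊗ V`, where `c₁ = c ⊗ id` and `c₂ = id ⊗ c`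
(transported along the associator). -/
def YangBaxter (c : V ⊗[K] V →ₗ[K] V ⊗[K] V) : Prop :=
  (rTensor V c) ∘ₗ
      ((TensorProduct.assoc K V V V).symm.toLinearMap ∘ₗ (lTensor V c) ∘ₗ
        (TensorProduct.assoc K V V V).toLinearMap) ∘ₗ (rTensor V c)
    = ((TensorProduct.assoc K V V V).symm.toLinearMap ∘ₗ (lTensor V c) ∘ₗ
        (TensorProduct.assoc K V V V).toLinearMap) ∘ₗ (rTensor V c) ∘ₗ
      ((TensorProduct.assoc K V V V).symm.toLinearMap ∘ₗ (lTensor V c) ∘ₗ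
        (TensorProduct.assoc K V V V).toLinearMap)

variable {V}

/-- The image of `L ⊗ V` in `V ⊗ V`, for a subspace `L ≤ V`. -/
def lT (L : Submodule K V) : Submodule K (V ⊗[K] V) :=
  LinearMap.range (rTensor V L.subtype)

/-- The image of `V ⊗ L` in `V ⊗ V`, for a subspace `L ≤ V`. -/
def rT (L : Submodule K V) : Submodule K (V ⊗[K] V) :=
  LinearMap.range (lTensor V L.subtype)

/-- `L` is a pre-categorical subspace of `(V, c)`:
`c (L⊗V + V⊗L) ⊆ L⊗V + V⊗L`. -/
def IsPreCategorical (c : V ⊗[K] V →ₗ[K] V ⊗[K] V) (L : Submodule K V) : Prop :=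
  Submodule.map c (lT K L ⊔ rT K L) ≤ lT K L ⊔ rT K L

/-- `L` is a categorical subspace of `(V, c)`:
`c (L⊗V) ⊆ V⊗L` and `c (V⊗L) ⊆ L⊗V`. -/
def IsCategorical (c : V ⊗[K] V →ₗ[K] V ⊗[K] V) (L : Submodule K V) : Prop :=
  Submodule.map c (lT K L) ≤ rT K L ∧ Submodule.map c (rT K L) ≤ lT K L

/-- A morphism of braided vector spaces `f : (V, cV) → (W, cW)`:
`cW ∘ (f ⊗ f) = (f ⊗ f) ∘ cV`. -/
def IsBraidedHom {W : Type*} [AddCommGroup W] [Module K W]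
    (cV : V ⊗[K] V →ₗ[K] V ⊗[K] V) (cW : W ⊗[K] W →ₗ[K] W ⊗[K] W)
    (f : V →ₗ[K] W) : Prop :=
  cW ∘ₗ TensorProduct.map f f = TensorProduct.map f f ∘ₗ cV

end BraidedDefs

/-- A braided bialgebra `(B, m, u, Δ, ε, c)` over `K`, with all structure maps
given as `K`-linear maps. -/
structure BB (B : Type*) [AddCommGroup B] [Module K B] where
  /-- multiplication -/
  mul : B ⊗[K] B →ₗ[K] B
  /-- unit -/
  unit : K →ₗ[K] B
  /-- comultiplication -/
  comul : B →ₗ[K] B ⊗[K] B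
  /-- counit -/
  counit : B →ₗ[K] K
  /-- braiding -/
  braid : B ⊗[K] B →ₗ[K] B ⊗[K] B
  mul_assoc' : mul ∘ₗ rTensor B mul
      = mul ∘ₗ lTensor B mul ∘ₗ (TensorProduct.assoc K B B B).toLinearMap
  one_mul' : ∀ b : B, mul (unit 1 ⊗ₜ[K] b) = b
  mul_one' : ∀ b : B, mul (b ⊗ₜ[K] unit 1) = b
  coassoc' : rTensor B comul ∘ₗ comul
      = (TensorProduct.assoc K B B B).symm.toLinearMap ∘ₗ lTensor B comul ∘ₗ comul
  counit_comul' : (TensorProduct.lid K B).toLinearMap ∘ₗ rTensor B counit ∘ₗ comul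
      = LinearMap.id
  comul_counit' : (TensorProduct.rid K B).toLinearMap ∘ₗ lTensor B counit ∘ₗ comul
      = LinearMap.id
  yang_baxter' : YangBaxter K B braid
  braid_mul_left : braid ∘ₗ rTensor B mul
      = lTensor B mul ∘ₗ (TensorProduct.assoc K B B B).toLinearMap
          ∘ₗ rTensor B braid ∘ₗ (TensorProduct.assoc K B B B).symm.toLinearMap
          ∘ₗ lTensor B braid ∘ₗ (TensorProduct.assoc K B B B).toLinearMap
  braid_mul_right : braid ∘ₗ lTensor B mul
      = rTensor B mul ∘ₗ (TensorProduct.assoc K B B B).symm.toLinearMap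
          ∘ₗ lTensor B braid ∘ₗ (TensorProduct.assoc K B B B).toLinearMap
          ∘ₗ rTensor B braid ∘ₗ (TensorProduct.assoc K B B B).symm.toLinearMap
  braid_unit_left : ∀ b : B, braid (unit 1 ⊗ₜ[K] b) = b ⊗ₜ[K] unit 1
  braid_unit_right : ∀ b : B, braid (b ⊗ₜ[K] unit 1) = unit 1 ⊗ₜ[K] b
  comul_braid_left : rTensor B comul ∘ₗ braid
      = (TensorProduct.assoc K B B B).symm.toLinearMap ∘ₗ lTensor B braid
          ∘ₗ (TensorProduct.assoc K B B B).toLinearMap ∘ₗ rTensor B braid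
          ∘ₗ (TensorProduct.assoc K B B B).symm.toLinearMap ∘ₗ lTensor B comul
  comul_braid_right : lTensor B comul ∘ₗ braid
      = (TensorProduct.assoc K B B B).toLinearMap ∘ₗ rTensor B braid
          ∘ₗ (TensorProduct.assoc K B B B).symm.toLinearMap ∘ₗ lTensor B braid
          ∘ₗ (TensorProduct.assoc K B B B).toLinearMap ∘ₗ rTensor B comul
  counit_braid_left : (TensorProduct.lid K B).toLinearMap ∘ₗ rTensor B counit ∘ₗ braid
      = (TensorProduct.rid K B).toLinearMap ∘ₗ lTensor B counit
  counit_braid_right : (TensorProduct.rid K B).toLinearMap ∘ₗ lTensor B counit ∘ₗ braid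
      = (TensorProduct.lid K B).toLinearMap ∘ₗ rTensor B counit
  comul_mul' : comul ∘ₗ mul
      = TensorProduct.map mul mul
          ∘ₗ (TensorProduct.assoc K (B ⊗[K] B) B B).toLinearMap
          ∘ₗ rTensor B ((TensorProduct.assoc K B B B).symm.toLinearMap)
          ∘ₗ rTensor B (lTensor B braid)
          ∘ₗ rTensor B ((TensorProduct.assoc K B B B).toLinearMap)
          ∘ₗ (TensorProduct.assoc K (B ⊗[K] B) B B).symm.toLinearMap
          ∘ₗ TensorProduct.map comul comul

variable {B B' : Type*} [AddCommGroup B] [Module K B] [AddCommGroup B'] [Module K B']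

/-- A morphism of braided bialgebras: an algebra map, a coalgebra map and a morphism
of braided vector spaces. -/
def IsBBHom (A : BB K B) (A' : BB K B') (f : B →ₗ[K] B') : Prop :=
  f ∘ₗ A.mul = A'.mul ∘ₗ TensorProduct.map f f ∧
  f ∘ₗ A.unit = A'.unit ∧
  A'.comul ∘ₗ f = TensorProduct.map f f ∘ₗ A.comul ∧
  A'.counit ∘ₗ f = A.counit ∧
  A'.braid ∘ₗ TensorProduct.map f f = TensorProduct.map f f ∘ₗ A.braid

/-- The space of primitive elements `P(B) = {x : Δ x = x ⊗ 1 + 1 ⊗ x}`. -/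
def Prim (A : BB K B) : Submodule K B :=
  LinearMap.ker (A.comul - (TensorProduct.mk K B B).flip (A.unit 1)
    - TensorProduct.mk K B B (A.unit 1))

/-- The product `M · N` of two subspaces of a braided bialgebra `B`. -/
def mulSub (A : BB K B) (M N : Submodule K B) : Submodule K B :=
  Submodule.map A.mul (LinearMap.range (TensorProduct.map M.subtype N.subtype))

/-- Iterated powers of a subspace `V` in `B`: `V^{·0} = K·1`, `V^{·(n+1)} = V^{·n} · V`. -/
def powSub (A : BB K B) (V : Submodule K B) : ℕ → Submodule K B
  | 0 => LinearMap.range A.unit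
  | (n+1) => mulSub K A (powSub A V n) V

/-- `V` generates `B` as a `K`-algebra. -/
def GeneratesAlgebra (A : BB K B) (V : Submodule K B) : Prop :=
  (⨆ n, powSub K A V n) = ⊤

/-- A braided ideal of a braided bialgebra: a two-sided ideal which is a coideal and a
pre-categorical subspace. -/
def IsBraidedIdeal (A : BB K B) (I : Submodule K B) : Prop :=
  mulSub K A ⊤ I ≤ I ∧ mulSub K A I ⊤ ≤ I ∧
  Submodule.map A.comul I ≤ lT K I ⊔ rT K I ∧
  I ≤ LinearMap.ker A.counit ∧
  IsPreCategorical K A.braid I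

/-- The two-sided ideal `B·S·B` of `B` generated by a subspace `S`. -/
def idealGen (A : BB K B) (S : Submodule K B) : Submodule K B :=
  mulSub K A (mulSub K A ⊤ S) ⊤

/-- `(B, γ)` is a `(V, c)`-bialgebra: `γ` is a morphism of braided vector spaces from
`(V, c)` to the infinitesimal part of `B`, and `γ(V)` generates `B` as a `K`-algebra. -/
def IsVCBialgebra {V : Type*} [AddCommGroup V] [Module K V]
    (c : V ⊗[K] V →ₗ[K] V ⊗[K] V) (A : BB K B) (γ : V →ₗ[K] B) : Prop :=
  LinearMap.range γ ≤ Prim K A ∧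
  A.braid ∘ₗ TensorProduct.map γ γ = TensorProduct.map γ γ ∘ₗ c ∧
  GeneratesAlgebra K A (LinearMap.range γ)

section AuxProof

variable {K : Type*} [Field K] {B : Type*} [AddCommGroup B] [Module K B]

/-- Auxiliary: the image of `M ⊗ N` in `B ⊗ B`. -/
def TT (M N : Submodule K B) : Submodule K (B ⊗[K] B) :=
  LinearMap.range (TensorProduct.map M.subtype N.subtype)

lemma tmul_mem_TT {M N : Submodule K B} {a b : B} (ha : a ∈ M) (hb : b ∈ N) :
    a ⊗ₜ[K] b ∈ TT M N :=
  ⟨(⟨a, ha⟩ : M) ⊗ₜ[K] (⟨b, hb⟩ : N), rfl⟩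

lemma TT_le {M N : Submodule K B} {W : Type*} [AddCommGroup W] [Module K W]
    (g : B ⊗[K] B →ₗ[K] W) (S : Submodule K W)
    (h : ∀ a ∈ M, ∀ b ∈ N, g (a ⊗ₜ[K] b) ∈ S) :
    ∀ t ∈ TT M N, g t ∈ S := by
  rintro _ ⟨u, rfl⟩
  induction u using TensorProduct.induction_on with
  | zero => simpa using S.zero_mem
  | tmul a b => simpa using h a a.2 b b.2
  | add x y hx hy => rw [map_add, map_add]; exact S.add_mem hx hy

lemma TT_mono {M N M' N' : Submodule K B} (hM : M ≤ M') (hN : N ≤ N') :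
    TT M N ≤ TT M' N' := fun t ht =>
  TT_le (LinearMap.id) (TT M' N')
    (fun a ha b hb => tmul_mem_TT (hM ha) (hN hb)) t ht

lemma lT_eq (L : Submodule K B) : lT K L = TT L ⊤ := by
  apply le_antisymm
  · rintro _ ⟨u, rfl⟩
    induction u using TensorProduct.induction_on with
    | zero => simpa using (TT L ⊤).zero_mem
    | tmul a b => simpa using tmul_mem_TT a.2 (Submodule.mem_top (x := b))
    | add x y hx hy => rw [map_add]; exact Submodule.add_mem _ hx hy
  · intro t ht
    exact TT_le LinearMap.id (lT K L)
      (fun a ha b _ => ⟨(⟨a, ha⟩ : L) ⊗ₜ[K] b, rfl⟩) t ht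

lemma rT_eq (L : Submodule K B) : rT K L = TT ⊤ L := by
  apply le_antisymm
  · rintro _ ⟨u, rfl⟩
    induction u using TensorProduct.induction_on with
    | zero => simpa using (TT ⊤ L).zero_mem
    | tmul a b => simpa using tmul_mem_TT (Submodule.mem_top (x := a)) b.2
    | add x y hx hy => rw [map_add]; exact Submodule.add_mem _ hx hy
  · intro t ht
    exact TT_le LinearMap.id (rT K L)
      (fun a _ b hb => ⟨a ⊗ₜ[K] (⟨b, hb⟩ : L), rfl⟩) t ht

lemma mul_mem_powSub_succ {A : BB K B} {V : Submodule K B} {n : ℕ} {p r : B}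
    (hp : p ∈ powSub K A V n) (hr : r ∈ V) :
    A.mul (p ⊗ₜ[K] r) ∈ powSub K A V (n + 1) :=
  Submodule.mem_map.2 ⟨p ⊗ₜ[K] r, tmul_mem_TT hp hr, rfl⟩

lemma keyA {A : BB K B} {V : Submodule K B}
    (hVV : ∀ a ∈ V, ∀ b ∈ V, A.braid (a ⊗ₜ[K] b) ∈ TT V V) (n : ℕ) :
    (∀ a ∈ V, ∀ b ∈ powSub K A V n,
        A.braid (a ⊗ₜ[K] b) ∈ TT (powSub K A V n) V) ∧
    (∀ a ∈ powSub K A V n, ∀ b ∈ V,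
        A.braid (a ⊗ₜ[K] b) ∈ TT V (powSub K A V n)) := by
  induction n with
  | zero =>
    constructor
    · rintro a ha _ ⟨k, rfl⟩
      have h1 : A.unit k = k • A.unit 1 := by
        rw [← map_smul, smul_eq_mul, mul_one]
      rw [h1, tmul_smul, map_smul, A.braid_unit_right]
      exact Submodule.smul_mem _ _ (tmul_mem_TT ⟨1, rfl⟩ ha)
    · rintro _ ⟨k, rfl⟩ b hb
      have h1 : A.unit k = k • A.unit 1 := by
        rw [← map_smul, smul_eq_mul, mul_one]
      rw [h1, ← smul_tmul', map_smul, A.braid_unit_left]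
      exact Submodule.smul_mem _ _ (tmul_mem_TT hb ⟨1, rfl⟩)
  | succ n ih =>
    constructor
    · rintro a ha _ ⟨t, ht, rfl⟩
      have key : ∀ u ∈ TT (powSub K A V n) V,
          (((A.braid ∘ₗ lTensor B A.mul) ∘ₗ
            TensorProduct.mk K B (B ⊗[K] B) a)) u
            ∈ TT (powSub K A V (n + 1)) V := by
        rw [A.braid_mul_right]
        intro u hu
        refine TT_le _ _ ?_ u hu
        intro p hp q hq
        simp only [LinearMap.coe_comp, Function.comp_apply, TensorProduct.mk_apply,
          LinearEquiv.coe_coe, TensorProduct.assoc_symm_tmul, LinearMap.rTensor_tmul]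
        refine TT_le ((rTensor B A.mul ∘ₗ (TensorProduct.assoc K B B B).symm.toLinearMap
            ∘ₗ lTensor B A.braid ∘ₗ (TensorProduct.assoc K B B B).toLinearMap)
            ∘ₗ (TensorProduct.mk K (B ⊗[K] B) B).flip q) _ ?_ _ (ih.1 a ha p hp)
        intro r hr s hs
        simp only [LinearMap.coe_comp, Function.comp_apply, LinearMap.flip_apply,
          TensorProduct.mk_apply, LinearEquiv.coe_coe, TensorProduct.assoc_tmul,
          LinearMap.lTensor_tmul]
        refine TT_le ((rTensor B A.mul ∘ₗ (TensorProduct.assoc K B B B).symm.toLinearMap)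
            ∘ₗ TensorProduct.mk K B (B ⊗[K] B) r) _ ?_ _ (hVV s hs q hq)
        intro x hx y hy
        simp only [LinearMap.coe_comp, Function.comp_apply, TensorProduct.mk_apply,
          LinearEquiv.coe_coe, TensorProduct.assoc_symm_tmul, LinearMap.rTensor_tmul]
        exact tmul_mem_TT (mul_mem_powSub_succ hr hx) hy
      simpa using key t ht
    · rintro _ ⟨t, ht, rfl⟩ b hb
      have key : ∀ u ∈ TT (powSub K A V n) V,
          (((A.braid ∘ₗ rTensor B A.mul) ∘ₗ
            (TensorProduct.mk K (B ⊗[K] B) B).flip b)) u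
            ∈ TT V (powSub K A V (n + 1)) := by
        rw [A.braid_mul_left]
        intro u hu
        refine TT_le _ _ ?_ u hu
        intro p hp q hq
        simp only [LinearMap.coe_comp, Function.comp_apply, LinearMap.flip_apply,
          TensorProduct.mk_apply, LinearEquiv.coe_coe, TensorProduct.assoc_tmul,
          LinearMap.lTensor_tmul]
        refine TT_le ((lTensor B A.mul ∘ₗ (TensorProduct.assoc K B B B).toLinearMap
            ∘ₗ rTensor B A.braid ∘ₗ (TensorProduct.assoc K B B B).symm.toLinearMap)
            ∘ₗ TensorProduct.mk K B (B ⊗[K] B) p) _ ?_ _ (hVV q hq b hb)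
        intro x hx y hy
        simp only [LinearMap.coe_comp, Function.comp_apply, TensorProduct.mk_apply,
          LinearEquiv.coe_coe, TensorProduct.assoc_symm_tmul, LinearMap.rTensor_tmul]
        refine TT_le ((lTensor B A.mul ∘ₗ (TensorProduct.assoc K B B B).toLinearMap)
            ∘ₗ (TensorProduct.mk K (B ⊗[K] B) B).flip y) _ ?_ _ (ih.2 p hp x hx)
        intro r hr s hs
        simp only [LinearMap.coe_comp, Function.comp_apply, LinearMap.flip_apply,
          TensorProduct.mk_apply, LinearEquiv.coe_coe, TensorProduct.assoc_tmul,
          LinearMap.lTensor_tmul]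
        exact tmul_mem_TT hr (mul_mem_powSub_succ hs hy)
      simpa using key t ht

lemma braid_tmul_mem_left {A : BB K B} {V : Submodule K B}
    (hgen : GeneratesAlgebra K A V)
    (hVV : ∀ a ∈ V, ∀ b ∈ V, A.braid (a ⊗ₜ[K] b) ∈ TT V V) :
    ∀ a ∈ V, ∀ b : B, A.braid (a ⊗ₜ[K] b) ∈ TT ⊤ V := by
  intro a ha b
  have hb : b ∈ (⨆ n, powSub K A V n) := by rw [hgen]; trivial
  have hle : (⨆ n, powSub K A V n) ≤
      Submodule.comap (A.braid ∘ₗ TensorProduct.mk K B B a) (TT ⊤ V) := by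
    refine iSup_le fun n x hx => ?_
    exact TT_mono le_top le_rfl ((keyA hVV n).1 a ha x hx)
  exact hle hb

lemma braid_tmul_mem_right {A : BB K B} {V : Submodule K B}
    (hgen : GeneratesAlgebra K A V)
    (hVV : ∀ a ∈ V, ∀ b ∈ V, A.braid (a ⊗ₜ[K] b) ∈ TT V V) :
    ∀ a : B, ∀ b ∈ V, A.braid (a ⊗ₜ[K] b) ∈ TT V ⊤ := by
  intro a b hb
  have ha : a ∈ (⨆ n, powSub K A V n) := by rw [hgen]; trivial
  have hle : (⨆ n, powSub K A V n) ≤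
      Submodule.comap (A.braid ∘ₗ (TensorProduct.mk K B B).flip b) (TT V ⊤) := by
    refine iSup_le fun n x hx => ?_
    exact TT_mono le_rfl le_top ((keyA hVV n).2 x hx b hb)
  exact hle ha

lemma inter_TT (V : Submodule K B) (t : B ⊗[K] B)
    (h1 : t ∈ TT V ⊤) (h2 : t ∈ TT ⊤ V) : t ∈ TT V V := by
  obtain ⟨W, hW⟩ := Submodule.exists_isCompl V
  set π : B →ₗ[K] B := V.subtype ∘ₗ V.linearProjOfIsCompl W hW with hπ
  have hπV : ∀ x : B, π x ∈ V := fun x => (V.linearProjOfIsCompl W hW x).2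
  have hπid : ∀ x ∈ V, π x = x := fun x hx => by
    exact congrArg (V.subtype)
      (Submodule.linearProjOfIsCompl_apply_left hW ⟨x, hx⟩)
  have claim1 : ∀ s ∈ TT V ⊤, rTensor B π s = s := by
    rintro _ ⟨u, rfl⟩
    induction u using TensorProduct.induction_on with
    | zero => simp
    | tmul a b => simp [hπid a a.2]
    | add x y hx hy => rw [map_add, map_add, hx, hy]
  have claim2 : ∀ s ∈ TT ⊤ V, lTensor B π s = s := by
    rintro _ ⟨u, rfl⟩
    induction u using TensorProduct.induction_on with
    | zero => simp
    | tmul a b => simp [hπid b b.2]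
    | add x y hx hy => rw [map_add, map_add, hx, hy]
  have hmap : ∀ s : B ⊗[K] B, TensorProduct.map π π s ∈ TT V V := by
    intro s
    induction s using TensorProduct.induction_on with
    | zero => simpa using (TT V V).zero_mem
    | tmul a b => simpa using tmul_mem_TT (hπV a) (hπV b)
    | add x y hx hy => rw [map_add]; exact Submodule.add_mem _ hx hy
  have ht : TensorProduct.map π π t = t := by
    rw [← LinearMap.lTensor_comp_rTensor, LinearMap.coe_comp, Function.comp_apply,
      claim1 t h1, claim2 t h2]
  rw [← ht]
  exact hmap t

end AuxProof

/-- For a subspace `V` generating a braided bialgebra `B` as an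
algebra, `V` is a braided subspace (`c(V⊗V) ⊆ V⊗V`) iff `V` is categorical. -/
theorem stmt_5 {B : Type*} [AddCommGroup B] [Module K B] (A : BB K B)
    (V : Submodule K B) (hgen : GeneratesAlgebra K A V) :
    Submodule.map A.braid (LinearMap.range (TensorProduct.map V.subtype V.subtype))
        ≤ LinearMap.range (TensorProduct.map V.subtype V.subtype)
      ↔ IsCategorical K A.braid V := by
  constructor
  · intro h
    have hVV : ∀ a ∈ V, ∀ b ∈ V, A.braid (a ⊗ₜ[K] b) ∈ TT V V := fun a ha b hb =>
      h (Submodule.mem_map_of_mem (tmul_mem_TT ha hb))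
    refine ⟨?_, ?_⟩
    · rw [lT_eq, rT_eq]
      rintro _ ⟨t, ht, rfl⟩
      exact TT_le A.braid (TT ⊤ V)
        (fun a ha b _ => braid_tmul_mem_left hgen hVV a ha b) t ht
    · rw [lT_eq, rT_eq]
      rintro _ ⟨t, ht, rfl⟩
      exact TT_le A.braid (TT V ⊤)
        (fun a _ b hb => braid_tmul_mem_right hgen hVV a b hb) t ht
  · intro hcat
    rintro _ ⟨t, ht, rfl⟩
    have h1 : A.braid t ∈ TT ⊤ V := by
      rw [← rT_eq]
      exact hcat.1 (Submodule.mem_map_of_mem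
        (by rw [lT_eq]; exact TT_mono le_rfl le_top ht))
    have h2 : A.braid t ∈ TT V ⊤ := by
      rw [← lT_eq]
      exact hcat.2 (Submodule.mem_map_of_mem
        (by rw [rT_eq]; exact TT_mono le_top le_rfl ht))
    exact inter_TT V (A.braid t) h2 h1
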